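/- For every positive integer n, the number of representations r_2(n) = #{(x,y) ∈ ℤ² : x² + y² = n} satisfies r_2(n) = 4 · ∑_{d | n, d odd} (-1)^{(d-1)/2}. -/

import Mathlib

open Zsqrtd

local notation "ℤi" => GaussianInt

noncomputable def Gcount (n : ℕ) : ℕ := Nat.card {z : ℤi // z.norm = (n : ℤ)}

lemma gi_norm_pow (z : ℤi) (k : ℕ) : (z ^ k).norm = z.norm ^ k := by
  induction k with
  | zero => simp [Zsqrtd.norm_one]
  | succ k ih => rw [pow_succ, Zsqrtd.norm_mul, ih, pow_succ]

lemma norm_one_cases (z : ℤi) (h : z.norm = 1) :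
    z = 1 ∨ z = -1 ∨ z = ⟨0,1⟩ ∨ z = ⟨0,-1⟩ := by
  obtain ⟨x, y⟩ := z
  have h1 : x * x + y * y = 1 := by
    have := h
    simp [Zsqrtd.norm_def] at this
    linarith
  have hx1 : x ≤ 1 := by nlinarith [mul_self_nonneg y]
  have hx2 : -1 ≤ x := by nlinarith [mul_self_nonneg y]
  have hy1 : y ≤ 1 := by nlinarith [mul_self_nonneg x]
  have hy2 : -1 ≤ y := by nlinarith [mul_self_nonneg x]
  interval_cases x <;> interval_cases y <;>
    simp_all [Zsqrtd.ext_iff] <;> omega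

lemma gi_prime_of_norm_prime {z : ℤi} (h : Prime z.norm) : Prime z := by
  rw [← UniqueFactorizationMonoid.irreducible_iff_prime]
  constructor
  · intro hu
    have := (Zsqrtd.norm_eq_one_iff' (by norm_num) z).mpr hu
    rw [this] at h
    exact h.ne_one rfl
  · intro a b hab
    have : z.norm = a.norm * b.norm := by rw [hab, Zsqrtd.norm_mul]
    rcases h.irreducible.isUnit_or_isUnit this with h' | h'
    · exact Or.inl ((Zsqrtd.isUnit_iff_norm_isUnit a).mpr h')
    · exact Or.inr ((Zsqrtd.isUnit_iff_norm_isUnit b).mpr h')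

lemma star_dvd_of_dvd_star {z w : ℤi} (h : z ∣ star w) : star z ∣ w := by
  obtain ⟨c, hc⟩ := h
  exact ⟨star c, by rw [← star_star w, hc, star_mul, mul_comm]⟩

lemma Gcount_step {π : ℤi} {c m : ℕ} (hc : 0 < c) (hπ : π.norm = (c : ℤ))
    (hdvd : ∀ z : ℤi, z.norm = ((c * m : ℕ) : ℤ) → π ∣ z) : Gcount (c * m) = Gcount m := by
  have hπ0 : π ≠ 0 := by
    intro h0
    rw [h0, Zsqrtd.norm_zero] at hπ
    exact absurd hπ.symm (by exact_mod_cast hc.ne')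
  have key : {w : ℤi // w.norm = (m : ℤ)} ≃ {z : ℤi // z.norm = ((c * m : ℕ) : ℤ)} := by
    refine Equiv.ofBijective (fun w => ⟨π * w.1, ?_⟩) ⟨?_, ?_⟩
    · rw [Zsqrtd.norm_mul, hπ, w.2]; push_cast; ring
    · intro w1 w2 h
      have := congrArg Subtype.val h
      exact Subtype.ext (mul_left_cancel₀ hπ0 this)
    · rintro ⟨z, hz⟩
      obtain ⟨w, rfl⟩ := hdvd z hz
      refine ⟨⟨w, ?_⟩, rfl⟩
      rw [Zsqrtd.norm_mul, hπ] at hz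
      push_cast at hz
      exact mul_left_cancel₀ (by exact_mod_cast hc.ne' : (c : ℤ) ≠ 0) hz
  exact (Nat.card_congr key.symm)

lemma Gcount_one : Gcount 1 = 4 := by
  have hset : {z : ℤi | z.norm = ((1 : ℕ) : ℤ)} =
      ↑({1, -1, ⟨0,1⟩, ⟨0,-1⟩} : Finset ℤi) := by
    ext z
    simp only [Set.mem_setOf_eq, Finset.coe_insert, Set.mem_insert_iff, Finset.coe_singleton,
      Set.mem_singleton_iff, Nat.cast_one]
    constructor
    · intro h
      rcases norm_one_cases z h with h | h | h | h <;> tauto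
    · rintro (rfl | rfl | rfl | rfl) <;> simp [Zsqrtd.norm_def] <;> rfl
  unfold Gcount
  have : Nat.card {z : ℤi // z.norm = ((1:ℕ) : ℤ)} = ({z : ℤi | z.norm = ((1:ℕ) : ℤ)}).ncard :=
    Nat.card_coe_set_eq _
  rw [this, hset, Set.ncard_coe_finset]
  decide

-- the prime 1+i
lemma two_eq_mul_conj : ((2 : ℕ) : ℤi) = ⟨1,1⟩ * star ⟨1,1⟩ := by
  rfl

lemma dvd_of_two_dvd_norm {z : ℤi} (h : (2 : ℤ) ∣ z.norm) : (⟨1,1⟩ : ℤi) ∣ z := by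
  have hprime : Prime (⟨1,1⟩ : ℤi) := by
    apply gi_prime_of_norm_prime
    have : (⟨1,1⟩ : ℤi).norm = 2 := by simp [Zsqrtd.norm_def]
    rw [this]; exact Int.prime_two
  have hdvd2 : (⟨1,1⟩ : ℤi) ∣ ((2 : ℕ) : ℤi) := by
    rw [two_eq_mul_conj]; exact dvd_mul_right _ _
  have hdvdnorm : (⟨1,1⟩ : ℤi) ∣ z * star z := by
    rw [← Zsqrtd.norm_eq_mul_conj]
    obtain ⟨k, hk⟩ := h
    calc (⟨1,1⟩ : ℤi) ∣ ((2:ℕ) : ℤi) := hdvd2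
      _ ∣ ((z.norm : ℤ) : ℤi) := by
          rw [hk]; push_cast; exact Dvd.intro _ rfl
  rcases hprime.dvd_or_dvd hdvdnorm with h' | h'
  · exact h'
  · have h2 : star (⟨1,1⟩ : ℤi) ∣ z := star_dvd_of_dvd_star h'
    have : (⟨1,1⟩ : ℤi) ∣ star (⟨1,1⟩ : ℤi) := ⟨⟨0,-1⟩, by rfl⟩
    exact this.trans h2

lemma Gcount_two (m : ℕ) : Gcount (2 * m) = Gcount m := by
  apply Gcount_step (π := ⟨1,1⟩) (by norm_num)
  · simp [Zsqrtd.norm_def]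
  · intro z hz
    apply dvd_of_two_dvd_norm
    rw [hz]; push_cast; exact Dvd.intro _ rfl

lemma Gcount_two_pow (e m : ℕ) : Gcount (2 ^ e * m) = Gcount m := by
  induction e with
  | zero => simp
  | succ e ih =>
    have : 2 ^ (e+1) * m = 2 * (2 ^ e * m) := by ring
    rw [this, Gcount_two, ih]

section P3
variable {p : ℕ} (hp : p.Prime) (hp3 : p % 4 = 3)
include hp hp3

lemma p3_dvd {z : ℤi} (h : (p : ℤ) ∣ z.norm) : ((p : ℕ) : ℤi) ∣ z := by
  haveI := Fact.mk hp
  have hprime : Prime ((p : ℕ) : ℤi) :=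
    GaussianInt.prime_of_nat_prime_of_mod_four_eq_three p hp3
  have hdvdnorm : ((p : ℕ) : ℤi) ∣ z * star z := by
    rw [← Zsqrtd.norm_eq_mul_conj]
    obtain ⟨k, hk⟩ := h
    rw [hk]; push_cast; exact Dvd.intro _ rfl
  rcases hprime.dvd_or_dvd hdvdnorm with h' | h'
  · exact h'
  · have h2 : star ((p : ℕ) : ℤi) ∣ z := star_dvd_of_dvd_star h'
    rwa [star_natCast] at h2

lemma Gcount_p3_sq (k : ℕ) : Gcount (p ^ 2 * k) = Gcount k := by
  apply Gcount_step (π := ((p:ℕ) : ℤi)) (by have := hp.pos; positivity)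
  · rw [Zsqrtd.norm_natCast]; push_cast; ring
  · intro z hz
    apply p3_dvd hp hp3
    rw [hz]; push_cast
    exact ⟨p * k, by ring⟩

lemma Gcount_p3_one {m : ℕ} (hm : ¬ p ∣ m) : Gcount (p * m) = 0 := by
  have : IsEmpty {z : ℤi // z.norm = ((p * m : ℕ) : ℤ)} := by
    constructor
    rintro ⟨z, hz⟩
    have hdvd : ((p:ℕ) : ℤi) ∣ z := by
      apply p3_dvd hp hp3
      rw [hz]; push_cast; exact Dvd.intro _ rfl
    obtain ⟨w, rfl⟩ := hdvd
    rw [Zsqrtd.norm_mul, Zsqrtd.norm_natCast] at hz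
    have hznn : 0 ≤ w.norm := Zsqrtd.norm_nonneg (by norm_num) w
    obtain ⟨t, ht⟩ := Int.eq_ofNat_of_zero_le hznn
    rw [ht] at hz
    have : (p : ℤ) * ((p : ℤ) * t) = (p : ℤ) * m := by push_cast at hz ⊢; linarith
    have h2 : (p : ℤ) * t = (m : ℤ) := mul_left_cancel₀ (by exact_mod_cast hp.ne_zero) this
    have hd : (p : ℤ) ∣ (m : ℤ) := ⟨t, h2.symm⟩
    exact hm (by exact_mod_cast hd)
  unfold Gcount
  exact Nat.card_of_isEmpty

lemma Gcount_p3_even (t m : ℕ) : Gcount (p ^ (2 * t) * m) = Gcount m := by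
  induction t with
  | zero => simp
  | succ t ih =>
    have : p ^ (2 * (t+1)) * m = p ^ 2 * (p ^ (2 * t) * m) := by ring
    rw [this, Gcount_p3_sq hp hp3, ih]

lemma Gcount_p3_odd (t : ℕ) {m : ℕ} (hm : ¬ p ∣ m) :
    Gcount (p ^ (2 * t + 1) * m) = 0 := by
  induction t with
  | zero => simpa using Gcount_p3_one hp hp3 hm
  | succ t ih =>
    have : p ^ (2 * (t+1) + 1) * m = p ^ 2 * (p ^ (2 * t + 1) * m) := by ring
    rw [this, Gcount_p3_sq hp hp3, ih]

end P3

section P1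
variable {p : ℕ} (hp : p.Prime) (hp1 : p % 4 = 1)

lemma norm_dvd_of_dvd {z w : ℤi} (h : z ∣ w) : z.norm ∣ w.norm := by
  obtain ⟨c, rfl⟩ := h
  rw [Zsqrtd.norm_mul]; exact Dvd.intro _ rfl

-- a Gaussian prime above p
include hp hp1 in
lemma exists_gauss_prime : ∃ π : ℤi, π.norm = (p : ℤ) ∧ Prime π ∧ ¬ π ∣ star π := by
  haveI := Fact.mk hp
  obtain ⟨a, b, hab⟩ := Nat.Prime.sq_add_sq (p := p) (by omega)
  refine ⟨⟨(a : ℤ), (b : ℤ)⟩, ?_, ?_, ?_⟩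
  · simp [Zsqrtd.norm_def]; push_cast [← hab]; ring
  · apply gi_prime_of_norm_prime
    have : Zsqrtd.norm (⟨(a:ℤ),(b:ℤ)⟩ : ℤi) = (p : ℤ) := by
      simp [Zsqrtd.norm_def]; push_cast [← hab]; ring
    rw [this]
    exact Nat.prime_iff_prime_int.mp hp
  · intro hdvd
    obtain ⟨u, hu⟩ := hdvd
    have hp0 : (p : ℤ) ≠ 0 := by exact_mod_cast hp.ne_zero
    have hnu : u.norm = 1 := by
      have hcong := congrArg Zsqrtd.norm hu
      rw [Zsqrtd.norm_conj, Zsqrtd.norm_mul] at hcong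
      rw [show Zsqrtd.norm (⟨(a:ℤ),(b:ℤ)⟩ : ℤi) = (p : ℤ) from by
        simp [Zsqrtd.norm_def]; push_cast [← hab]; ring] at hcong
      have : (p : ℤ) * 1 = (p : ℤ) * u.norm := by linarith
      exact (mul_left_cancel₀ hp0 this).symm
    have hsq : ¬ ∃ c : ℕ, c * c = p := by
      rintro ⟨c, hc⟩
      rcases (hp.eq_one_or_self_of_dvd c ⟨c, hc.symm⟩) with rfl | rfl
      · have := hp.one_lt; omega
      · nlinarith [hp.two_le]
    rcases norm_one_cases u hnu with rfl | rfl | rfl | rfl <;>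
      rw [Zsqrtd.ext_iff] at hu <;>
      simp [Zsqrtd.re_star, Zsqrtd.im_star, Zsqrtd.re_mul, Zsqrtd.im_mul] at hu
    · have hb : b = 0 := by omega
      refine hsq ⟨a, ?_⟩; subst hb; nlinarith
    · have ha : a = 0 := by omega
      refine hsq ⟨b, ?_⟩; subst ha; nlinarith
    · have hb : a = 0 ∧ b = 0 := by omega
      have h2 := hp.two_le
      obtain ⟨rfl, rfl⟩ := hb
      simp at hab; omega
    · obtain ⟨hab2, -⟩ := hu
      have h2 : 2 ∣ p := ⟨a * a, by subst hab2; nlinarith⟩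
      rcases (hp.eq_one_or_self_of_dvd 2 h2) with h | h <;> omega

end P1

section P1b
variable {p : ℕ} {π : ℤi} (hp : p.Prime) (hπn : π.norm = (p : ℤ)) (hπ : Prime π)
  (hnd : ¬ π ∣ star π)

include hπn in
lemma p_eq_mul_conj : ((p : ℕ) : ℤi) = π * star π := by
  have := Zsqrtd.norm_eq_mul_conj π
  rw [hπn] at this
  exact_mod_cast this

include hp hπn hπ in
lemma dichotomy {z : ℤi} (h : (p : ℤ) ∣ z.norm) : π ∣ z ∨ star π ∣ z := by
  have h1 : π ∣ z * star z := by
    rw [← Zsqrtd.norm_eq_mul_conj]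
    obtain ⟨k, hk⟩ := h
    calc π ∣ ((p : ℕ) : ℤi) := (p_eq_mul_conj hπn) ▸ dvd_mul_right _ _
      _ ∣ ((z.norm : ℤ) : ℤi) := by rw [hk]; push_cast; exact Dvd.intro _ rfl
  rcases hπ.dvd_or_dvd h1 with h' | h'
  · exact Or.inl h'
  · exact Or.inr (star_dvd_of_dvd_star h')

include hp hπn hπ in
lemma rep_exists (m : ℕ) (e : ℕ) :
    ∀ z : ℤi, z.norm = (p : ℤ) ^ e * (m : ℤ) →
      ∃ j ≤ e, ∃ w : ℤi, w.norm = (m : ℤ) ∧ z = π ^ j * (star π) ^ (e - j) * w := by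
  induction e with
  | zero => intro z hz; exact ⟨0, le_refl _, z, by simpa using hz, by simp⟩
  | succ e ih =>
    intro z hz
    have hp0 : (p : ℤ) ≠ 0 := by exact_mod_cast hp.ne_zero
    have hdvd : (p : ℤ) ∣ z.norm := by rw [hz]; exact ⟨(p:ℤ)^e * m, by ring⟩
    by_cases hπz : π ∣ z
    · obtain ⟨z₁, rfl⟩ := hπz
      rw [Zsqrtd.norm_mul, hπn] at hz
      have hz₁ : z₁.norm = (p : ℤ) ^ e * m :=
        mul_left_cancel₀ hp0 (by rw [hz, pow_succ]; ring)
      obtain ⟨j, hj, w, hw, rfl⟩ := ih z₁ hz₁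
      exact ⟨j + 1, by omega, w, hw, by
        rw [show e + 1 - (j + 1) = e - j from by omega]; ring⟩
    · rcases dichotomy hp hπn hπ hdvd with h' | h'
      · exact absurd h' hπz
      obtain ⟨z₁, rfl⟩ := h'
      rw [Zsqrtd.norm_mul, Zsqrtd.norm_conj, hπn] at hz
      have hz₁ : z₁.norm = (p : ℤ) ^ e * m :=
        mul_left_cancel₀ hp0 (by rw [hz, pow_succ]; ring)
      obtain ⟨j, hj, w, hw, rfl⟩ := ih z₁ hz₁
      have hj0 : j = 0 := by
        by_contra hj0
        apply hπz
        have h1 : π ∣ π ^ j := dvd_pow_self π hj0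
        exact ((h1.mul_right ((star π) ^ (e - j))).mul_right w).mul_left (star π)
      subst hj0
      exact ⟨0, by omega, w, hw, by simp; ring⟩

end P1b

lemma Gcount_p1 {p : ℕ} (hp : p.Prime) (hp1 : p % 4 = 1) (e : ℕ) {m : ℕ} (hpm : ¬ p ∣ m) :
    Gcount (p ^ e * m) = (e + 1) * Gcount m := by
  obtain ⟨π, hπn, hπ, hnd⟩ := exists_gauss_prime hp hp1
  have hπ0 : π ≠ 0 := hπ.ne_zero
  have hp0 : (p : ℤ) ≠ 0 := by exact_mod_cast hp.ne_zero
  have hpw : ∀ w : ℤi, w.norm = (m : ℤ) → ¬ π ∣ w := by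
    intro w hw hdvd
    have := norm_dvd_of_dvd hdvd
    rw [hπn, hw] at this
    exact hpm (by exact_mod_cast this)
  have key : (Fin (e + 1)) × {w : ℤi // w.norm = (m : ℤ)} ≃
      {z : ℤi // z.norm = ((p ^ e * m : ℕ) : ℤ)} := by
    refine Equiv.ofBijective
      (fun x => ⟨π ^ (x.1 : ℕ) * (star π) ^ (e - (x.1 : ℕ)) * x.2.1, ?_⟩) ⟨?_, ?_⟩
    · have hle : (x.1 : ℕ) ≤ e := Nat.lt_succ_iff.mp x.1.isLt
      rw [Zsqrtd.norm_mul, Zsqrtd.norm_mul, gi_norm_pow, gi_norm_pow, Zsqrtd.norm_conj,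
        hπn, x.2.2, ← pow_add, Nat.add_sub_cancel' hle]
      push_cast; ring
    · rintro ⟨j1, w1⟩ ⟨j2, w2⟩ h
      have hh : π ^ (j1 : ℕ) * (star π) ^ (e - (j1 : ℕ)) * w1.1
          = π ^ (j2 : ℕ) * (star π) ^ (e - (j2 : ℕ)) * w2.1 := congrArg Subtype.val h
      have hj1 : (j1 : ℕ) ≤ e := Nat.lt_succ_iff.mp j1.isLt
      have hj2 : (j2 : ℕ) ≤ e := Nat.lt_succ_iff.mp j2.isLt
      -- key claim : no strict inequality possible
      have claim : ∀ (a b : ℕ), a ≤ e → b ≤ e → ∀ u v : ℤi, u.norm = (m : ℤ) →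
          v.norm = (m : ℤ) →
          π ^ a * (star π) ^ (e - a) * u = π ^ b * (star π) ^ (e - b) * v → ¬ a < b := by
        intro a b ha hb u v hu hv heq hab
        obtain ⟨k, rfl⟩ : ∃ k, b = a + (k + 1) := ⟨b - a - 1, by omega⟩
        have hsplit : π ^ a * ((star π) ^ (e - a) * u)
            = π ^ a * (π ^ (k + 1) * ((star π) ^ (e - (a + (k + 1))) * v)) := by
          rw [← mul_assoc, heq, pow_add]
          ring
        have hcan : (star π) ^ (e - a) * u
            = π ^ (k + 1) * ((star π) ^ (e - (a + (k + 1))) * v) :=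
          mul_left_cancel₀ (pow_ne_zero _ hπ0) hsplit
        have hπdvd : π ∣ (star π) ^ (e - a) * u := by
          rw [hcan]
          exact (dvd_pow_self π (by omega : k + 1 ≠ 0)).mul_right _
        rcases hπ.dvd_or_dvd hπdvd with h' | h'
        · exact hnd (hπ.dvd_of_dvd_pow h')
        · exact hpw u hu h'
      have hjeq : (j1 : ℕ) = (j2 : ℕ) := by
        rcases lt_trichotomy (j1 : ℕ) (j2 : ℕ) with h' | h' | h'
        · exact absurd h' (claim _ _ hj1 hj2 w1.1 w2.1 w1.2 w2.2 hh)
        · exact h'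
        · exact absurd h' (claim _ _ hj2 hj1 w2.1 w1.1 w2.2 w1.2 hh.symm)
      have hw : w1 = w2 := by
        rw [← hjeq] at hh
        exact Subtype.ext (mul_left_cancel₀ (mul_ne_zero (pow_ne_zero _ hπ0)
          (pow_ne_zero _ (star_ne_zero.mpr hπ0))) hh)
      exact Prod.ext (Fin.ext hjeq) hw
    · rintro ⟨z, hz⟩
      have hz' : z.norm = (p : ℤ) ^ e * (m : ℤ) := by rw [hz]; push_cast; ring
      obtain ⟨j, hj, w, hw, hrep⟩ := rep_exists hp hπn hπ m e z hz'
      exact ⟨⟨⟨j, by omega⟩, ⟨w, hw⟩⟩, by simp only [Subtype.mk.injEq]; exact hrep.symm⟩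
  unfold Gcount
  rw [← Nat.card_congr key, Nat.card_prod, Nat.card_eq_fintype_card, Fintype.card_fin]

open ArithmeticFunction in
noncomputable def chiAF : ArithmeticFunction ℤ :=
  ⟨fun n => ZMod.χ₄ (n : ZMod 4), by simp⟩

lemma chiAF_apply (n : ℕ) : chiAF n = ZMod.χ₄ (n : ZMod 4) := rfl

lemma chiAF_mult : chiAF.IsMultiplicative := by
  constructor
  · rw [chiAF_apply]; simp
  · intro m n _
    rw [chiAF_apply, chiAF_apply, chiAF_apply]
    push_cast
    exact map_mul _ _ _

noncomputable def Scount : ArithmeticFunction ℤ := ↑ArithmeticFunction.zeta * chiAF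

lemma Scount_mult : Scount.IsMultiplicative :=
  ArithmeticFunction.isMultiplicative_zeta.natCast.mul chiAF_mult

lemma Scount_apply (n : ℕ) : Scount n = ∑ d ∈ n.divisors, ZMod.χ₄ (d : ZMod 4) :=
  ArithmeticFunction.coe_zeta_mul_apply

lemma Scount_prime_pow {p : ℕ} (hp : p.Prime) (e : ℕ) :
    Scount (p ^ e) = ∑ i ∈ Finset.range (e + 1), (ZMod.χ₄ (p : ZMod 4)) ^ i := by
  rw [Scount_apply, Nat.sum_divisors_prime_pow hp]
  refine Finset.sum_congr rfl fun i _ => ?_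
  push_cast
  exact map_pow _ _ _

lemma Scount_two_pow (e : ℕ) : Scount (2 ^ e) = 1 := by
  rw [Scount_prime_pow Nat.prime_two]
  have h2 : ZMod.χ₄ ((2 : ℕ) : ZMod 4) = 0 := by decide
  rw [h2]
  rw [Finset.sum_range_succ']
  simp

lemma Scount_p1_pow {p : ℕ} (hp : p.Prime) (hp1 : p % 4 = 1) (e : ℕ) :
    Scount (p ^ e) = (e + 1 : ℤ) := by
  rw [Scount_prime_pow hp]
  have h1 : ZMod.χ₄ ((p : ℕ) : ZMod 4) = 1 := ZMod.χ₄_nat_one_mod_four hp1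
  rw [h1]
  simp

lemma Scount_p3_pow {p : ℕ} (hp : p.Prime) (hp3 : p % 4 = 3) (e : ℕ) :
    Scount (p ^ e) = if Even e then 1 else 0 := by
  rw [Scount_prime_pow hp]
  have h1 : ZMod.χ₄ ((p : ℕ) : ZMod 4) = -1 := ZMod.χ₄_nat_three_mod_four hp3
  rw [h1, neg_one_geom_sum]
  by_cases he : Even e <;> simp [Nat.even_add_one, he]

lemma main_count : ∀ n : ℕ, 0 < n → (Gcount n : ℤ) = 4 * Scount n := by
  intro n
  induction n using Nat.strong_induction_on with
  | _ n ih =>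
    intro hn
    rcases eq_or_lt_of_le (show 1 ≤ n from hn) with h1 | h1
    · rw [← h1]
      rw [show Gcount 1 = 4 from Gcount_one, Scount_mult.map_one]
      norm_num
    · -- n ≥ 2
      have hn0 : n ≠ 0 := by omega
      have hn1 : n ≠ 1 := by omega
      set p := n.minFac with hpdef
      have hp : p.Prime := Nat.minFac_prime hn1
      set e := n.factorization p with hedef
      set m := n / p ^ e with hmdef
      have hfact : p ^ e * m = n := Nat.ordProj_mul_ordCompl_eq_self n p
      have hpm : ¬ p ∣ m := Nat.not_dvd_ordCompl hp hn0
      have he : 0 < e := hp.factorization_pos_of_dvd hn0 (Nat.minFac_dvd n)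
      have hm0 : 0 < m := Nat.ordCompl_pos p hn0
      have hmn : m < n := by
        have h2 : 2 ≤ p ^ e := by
          calc 2 ≤ p := hp.two_le
          _ ≤ p ^ e := Nat.le_self_pow (by omega) p
        calc m < 2 * m := by omega
        _ ≤ p ^ e * m := Nat.mul_le_mul_right m h2
        _ = n := hfact
      have hcop : Nat.Coprime (p ^ e) m := (Nat.coprime_ordCompl hp hn0).pow_left e
      clear_value m e p
      have hS : Scount n = Scount (p ^ e) * Scount m := by
        rw [← hfact]; exact Scount_mult.map_mul_of_coprime hcop
      have ihm := ih m hmn hm0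
      rcases eq_or_ne p 2 with hp2 | hp2
      · -- p = 2
        have hG : Gcount n = Gcount m := by
          rw [← hfact, hp2, Gcount_two_pow]
        rw [hG, hS, hp2, Scount_two_pow, ihm]; ring
      · -- p odd
        have hodd : p % 2 = 1 := Nat.odd_iff.mp (hp.odd_of_ne_two hp2)
        have h14 : p % 4 = 1 ∨ p % 4 = 3 := by omega
        rcases h14 with hp1 | hp3
        · -- p ≡ 1 mod 4
          have hG : Gcount n = (e + 1) * Gcount m := by
            rw [← hfact]; exact Gcount_p1 hp hp1 e hpm
          rw [hG, hS, Scount_p1_pow hp hp1]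
          push_cast [ihm]; ring
        · -- p ≡ 3 mod 4
          rcases Nat.even_or_odd e with hee | hee
          · obtain ⟨t, rfl⟩ : ∃ t, e = 2 * t := by obtain ⟨t, ht⟩ := hee; exact ⟨t, by omega⟩
            have hG : Gcount n = Gcount m := by
              rw [← hfact]; exact Gcount_p3_even hp hp3 t m
            rw [hG, hS, Scount_p3_pow hp hp3, if_pos (by exact ⟨t, by ring⟩), ihm]
            ring
          · obtain ⟨t, rfl⟩ : ∃ t, e = 2 * t + 1 := hee
            have hG : Gcount n = 0 := by
              rw [← hfact]; exact Gcount_p3_odd hp hp3 t hpm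
            rw [hG, hS, Scount_p3_pow hp hp3, if_neg (by simp [Nat.even_add_one, parity_simps])]
            simp

lemma pairs_eq_Gcount (n : ℕ) :
    {p : ℤ × ℤ | p.1 ^ 2 + p.2 ^ 2 = (n : ℤ)}.ncard = Gcount n := by
  unfold Gcount
  rw [← Nat.card_coe_set_eq]
  refine Nat.card_congr ⟨fun x => ⟨⟨x.1.1, x.1.2⟩, ?_⟩, fun z => ⟨(z.1.re, z.1.im), ?_⟩,
    fun x => rfl, fun z => rfl⟩
  · have hx := x.2
    simp only [Set.mem_setOf_eq] at hx
    simp only [Zsqrtd.norm_def]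
    nlinarith [hx]
  · have hz := z.2
    simp only [Zsqrtd.norm_def] at hz
    simp only [Set.mem_setOf_eq]
    nlinarith [hz]

lemma filter_sum_eq_Scount (n : ℕ) :
    ∑ d ∈ n.divisors.filter (fun d => d % 2 = 1), (-1 : ℤ) ^ ((d - 1) / 2) = Scount n := by
  rw [Scount_apply, Finset.sum_filter]
  refine Finset.sum_congr rfl fun d _ => ?_
  by_cases hd : d % 2 = 1
  · rw [if_pos hd, ZMod.χ₄_eq_neg_one_pow hd]
    congr 1
    omega
  · rw [if_neg hd, ZMod.χ₄_nat_eq_if_mod_four, if_pos (by omega : d % 2 = 0)]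

/-- The representation count `r₂(n)` equals `4·∑_{d ∣ n, d odd} (-1)^((d-1)/2)`. -/
theorem stmt_3 (n : ℕ) (hn : 0 < n) :
    (({p : ℤ × ℤ | p.1 ^ 2 + p.2 ^ 2 = (n : ℤ)}.ncard : ℤ)) =
      4 * ∑ d ∈ n.divisors.filter (fun d => d % 2 = 1), (-1 : ℤ) ^ ((d - 1) / 2) := by
  rw [pairs_eq_Gcount, filter_sum_eq_Scount]
  exact main_count n hn
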